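/- Let A be an associative algebra over a field of characteristic p > 2 and suppose elements e^{(r)} (r ≥ 1) satisfy [e^{(r)}, e^{(s)}] = Σ_{t=r}^{s-1} e^{(t)} e^{(r+s-1-t)} for 1 ≤ r < s, and suppose all coefficients of the series e(u)^p are central in A. Then each element (e^{(r)})^p is central in A. -/

import Mathlib

/-!
STATEMENT 16: Let `A` be an associative algebra over a field of characteristic
`p > 2` and suppose the elements `e^{(r)}` (`r ≥ 1`, with `e^{(0)} = 0`) satisfy
`[e^{(r)}, e^{(s)}] = Σ_{t=r}^{s-1} e^{(t)} e^{(r+s-1-t)}` for `1 ≤ r < s`, and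
that all coefficients of the series `e(u)^p` are central in `A`.  Then each
`(e^{(r)})^p` is central in `A`.  Here `e(u) = Σ_{r≥1} e^{(r)} u^{-r}` is viewed
as the power series `PowerSeries.mk e` in the variable `u⁻¹`.
-/

noncomputable section

namespace Stmt16Aux

open Finset PowerSeries

/-- scalar prefactor -/
def cc (k j : ℕ) : ℤ := (-1) ^ (k - j) * (k.choose j : ℤ)

/-- the central product `∏ (1 + i x)`, defined recursively to avoid
commutativity assumptions -/
def P {R : Type*} [Semiring R] (x : R) : ℕ → R
  | 0 => 1
  | j + 1 => P x j * (1 + (j : R) * x)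

section Core

variable {R : Type*} [Ring R]

/-- the general summand -/
def M (E b x : R) (k j : ℕ) : R :=
  (cc k j : R) * (P x j * (b ^ (k - j) * E ^ j))

lemma P_zero (x : R) : P x 0 = 1 := rfl

lemma P_succ (x : R) (j : ℕ) : P x (j + 1) = P x j * (1 + (j : R) * x) := rfl

lemma P_map {R S : Type*} [Semiring R] [Semiring S] (ψ : R →+* S) (x : R) :
    ∀ j : ℕ, ψ (P x j) = P (ψ x) j := by
  intro j
  induction j with
  | zero => simp [P]
  | succ j ih =>
    show ψ (P x j * (1 + (j : R) * x)) = P (ψ x) j * (1 + (j : S) * ψ x)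
    rw [map_mul, ih, map_add, map_one, map_mul, map_natCast]

lemma pow_mul_b (E b x : R) (hx : ∀ t : R, Commute x t)
    (h : E * b = b * E - E ^ 2 * x) :
    ∀ j : ℕ, E ^ j * b = b * E ^ j - (j : R) * (E ^ (j + 1) * x) := by
  intro j
  induction j with
  | zero => simp
  | succ j ih =>
    have he2 : E * (b * E ^ j) = b * E ^ (j + 1) - E ^ (j + 2) * x := by
      calc E * (b * E ^ j) = (E * b) * E ^ j := (mul_assoc _ _ _).symm
        _ = (b * E - E ^ 2 * x) * E ^ j := by rw [h]
        _ = b * (E * E ^ j) - E ^ 2 * (x * E ^ j) := by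
            rw [sub_mul, mul_assoc, mul_assoc]
        _ = b * E ^ (j + 1) - E ^ 2 * (E ^ j * x) := by
            rw [← pow_succ', (hx (E ^ j)).eq]
        _ = b * E ^ (j + 1) - (E ^ 2 * E ^ j) * x := by rw [mul_assoc]
        _ = b * E ^ (j + 1) - E ^ (j + 2) * x := by
            rw [← pow_add, Nat.add_comm 2 j]
    have he3 : E * ((j : R) * (E ^ (j + 1) * x)) = (j : R) * (E ^ (j + 2) * x) := by
      calc E * ((j : R) * (E ^ (j + 1) * x))
          = (E * (j : R)) * (E ^ (j + 1) * x) := (mul_assoc _ _ _).symm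
        _ = ((j : R) * E) * (E ^ (j + 1) * x) := by
            rw [← (Nat.cast_commute j E).eq]
        _ = (j : R) * ((E * E ^ (j + 1)) * x) := by rw [mul_assoc, ← mul_assoc E]
        _ = (j : R) * (E ^ (j + 2) * x) := by rw [← pow_succ']
    calc E ^ (j + 1) * b = E * (E ^ j * b) := by rw [pow_succ', mul_assoc]
      _ = E * (b * E ^ j) - E * ((j : R) * (E ^ (j + 1) * x)) := by
          rw [ih, mul_sub]
      _ = b * E ^ (j + 1) - E ^ (j + 2) * x - (j : R) * (E ^ (j + 2) * x) := by
          rw [he2, he3]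
      _ = b * E ^ (j + 1) - ((j + 1 : ℕ) : R) * (E ^ (j + 1 + 1) * x) := by
          have hexp : j + 1 + 1 = j + 2 := rfl
          rw [hexp, sub_sub]
          congr 1
          rw [Nat.cast_add, Nat.cast_one, add_mul, one_mul, add_comm]

lemma core (E b x : R) (hx : ∀ t : R, Commute x t)
    (h : E * b = b * E - E ^ 2 * x) (k : ℕ) :
    (E - b) ^ k = ∑ j ∈ range (k + 1), M E b x k j := by
  induction k with
  | zero => simp [M, cc, P]
  | succ k ih =>
    have hterm : ∀ j ∈ range (k + 1),
        M E b x k j * (E - b)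
          = (cc k j : R) * (P x (j + 1) * (b ^ (k - j) * E ^ (j + 1)))
            - (cc k j : R) * (P x j * (b ^ (k + 1 - j) * E ^ j)) := by
      intro j hj
      have hEjEb : E ^ j * (E - b) =
          E ^ (j + 1) - (b * E ^ j - (j : R) * (E ^ (j + 1) * x)) := by
        rw [mul_sub, ← pow_succ, pow_mul_b E b x hx h j]
      have hX : P x (j + 1) * (b ^ (k - j) * E ^ (j + 1))
          = P x j * (b ^ (k - j) * E ^ (j + 1))
            + P x j * (b ^ (k - j) * ((j : R) * (E ^ (j + 1) * x))) := by
        have h1 : ((j : R) * x) * (b ^ (k - j) * E ^ (j + 1))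
            = b ^ (k - j) * ((j : R) * (E ^ (j + 1) * x)) := by
          have c1 : ((j : R) * x) * b ^ (k - j) = b ^ (k - j) * ((j : R) * x) :=
            ((Nat.cast_commute j (b ^ (k - j))).mul_left (hx (b ^ (k - j)))).eq
          rw [← mul_assoc, c1, mul_assoc]
          congr 1
          rw [mul_assoc, (hx (E ^ (j + 1))).eq]
        rw [P_succ, mul_assoc, add_mul, one_mul, h1, mul_add]
      have hY : b ^ (k + 1 - j) * E ^ j = b ^ (k - j) * (b * E ^ j) := by
        have hjk : j ≤ k := Nat.lt_succ_iff.mp (mem_range.mp hj)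
        have hs : k + 1 - j = (k - j) + 1 := by omega
        rw [hs, pow_succ, mul_assoc]
      simp only [M]
      rw [mul_assoc ((cc k j : ℤ) : R) (P x j * (b ^ (k - j) * E ^ j)) (E - b),
        mul_assoc (P x j) (b ^ (k - j) * E ^ j) (E - b),
        mul_assoc (b ^ (k - j)) (E ^ j) (E - b), hEjEb, hX, hY]
      simp only [mul_sub, mul_add]
      abel
    have hg : ∀ m ∈ range (k + 1),
        M E b x (k + 1) (m + 1)
          = (cc k m : R) * (P x (m + 1) * (b ^ (k - m) * E ^ (m + 1)))
            - (cc k (m + 1) : R) * (P x (m + 1) * (b ^ (k - m) * E ^ (m + 1))) := by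
      intro m hm
      have hmk : m ≤ k := Nat.lt_succ_iff.mp (mem_range.mp hm)
      have hsub : k + 1 - (m + 1) = k - m := by omega
      have hpas : cc (k + 1) (m + 1) = cc k m - cc k (m + 1) := by
        by_cases hmk' : m = k
        · subst hmk'
          simp [cc, Nat.choose_succ_self, Nat.choose_self]
        · have h1 : k - m = (k - (m + 1)) + 1 := by omega
          unfold cc
          rw [Nat.succ_sub_succ, Nat.choose_succ_succ, h1]
          push_cast
          ring
      simp only [M]
      rw [hsub, hpas, Int.cast_sub, sub_mul]
    calc (E - b) ^ (k + 1)
        = (∑ j ∈ range (k + 1), M E b x k j) * (E - b) := by rw [pow_succ, ih]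
      _ = ∑ j ∈ range (k + 1), M E b x k j * (E - b) := by rw [sum_mul]
      _ = ∑ j ∈ range (k + 1),
            ((cc k j : R) * (P x (j + 1) * (b ^ (k - j) * E ^ (j + 1)))
              - (cc k j : R) * (P x j * (b ^ (k + 1 - j) * E ^ j))) :=
          Finset.sum_congr rfl hterm
      _ = (∑ j ∈ range (k + 1),
            (cc k j : R) * (P x (j + 1) * (b ^ (k - j) * E ^ (j + 1))))
          - ∑ j ∈ range (k + 1),
            (cc k j : R) * (P x j * (b ^ (k + 1 - j) * E ^ j)) :=
          Finset.sum_sub_distrib _ _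
      _ = ∑ j ∈ range (k + 1 + 1), M E b x (k + 1) j := by
          rw [sum_range_succ' (fun j => M E b x (k + 1) j) (k + 1)]
          rw [Finset.sum_congr rfl hg, Finset.sum_sub_distrib]
          have hYsum : (∑ j ∈ range (k + 1),
              (cc k j : R) * (P x j * (b ^ (k + 1 - j) * E ^ j)))
              = (∑ j ∈ range (k + 1),
                  (cc k (j + 1) : R) * (P x (j + 1) * (b ^ (k - j) * E ^ (j + 1))))
                - M E b x (k + 1) 0 := by
            rw [sum_range_succ' (fun j => (cc k j : R)
              * (P x j * (b ^ (k + 1 - j) * E ^ j))) k]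
            rw [sum_range_succ (fun j => (cc k (j + 1) : R)
              * (P x (j + 1) * (b ^ (k - j) * E ^ (j + 1)))) k]
            have hZk : (cc k (k + 1) : R)
                * (P x (k + 1) * (b ^ (k - k) * E ^ (k + 1))) = 0 := by
              have : cc k (k + 1) = 0 := by simp [cc, Nat.choose_succ_self]
              rw [this, Int.cast_zero, zero_mul]
            have hYZ : ∀ j ∈ range k,
                (cc k (j + 1) : R) * (P x (j + 1) * (b ^ (k + 1 - (j + 1)) * E ^ (j + 1)))
                  = (cc k (j + 1) : R) * (P x (j + 1) * (b ^ (k - j) * E ^ (j + 1))) := by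
              intro j hj
              have : k + 1 - (j + 1) = k - j := by omega
              rw [this]
            have hM0 : M E b x (k + 1) 0
                = -((cc k 0 : R) * (P x 0 * (b ^ (k + 1 - 0) * E ^ 0))) := by
              have hneg : cc (k + 1) 0 = -(cc k 0) := by
                simp [cc, pow_succ]
              simp only [M]
              rw [hneg, Int.cast_neg, neg_mul]
            rw [Finset.sum_congr rfl hYZ, hZk, hM0]
            abel
          rw [hYsum]
          abel

lemma core_p (p : ℕ) (hp : p.Prime) (hp2 : p ≠ 2) (hpR : ((p : ℕ) : R) = 0)
    (E b x : R) (hx : ∀ t : R, Commute x t)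
    (h : E * b = b * E - E ^ 2 * x) :
    (E - b) ^ p = P x p * E ^ p - b ^ p := by
  have hodd : Odd p := hp.odd_of_ne_two hp2
  have h1 := core E b x hx h p
  rw [sum_range_succ] at h1
  have hmid : ∀ j ∈ range p, M E b x p j = if j = 0 then -(b ^ p) else 0 := by
    intro j hj
    have hj' : j < p := mem_range.mp hj
    by_cases h0 : j = 0
    · subst h0
      rw [if_pos rfl]
      have hcc : cc p 0 = -1 := by
        simp [cc, hodd.neg_one_pow]
      simp only [M]
      rw [hcc]
      simp [P]
    · rw [if_neg h0]
      obtain ⟨t, ht⟩ := hp.dvd_choose_self h0 hj'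
      have hz : (cc p j : R) = 0 := by
        unfold cc
        rw [ht]
        push_cast
        rw [hpR]
        simp
      simp only [M]
      rw [hz, zero_mul]
  rw [Finset.sum_congr rfl hmid,
    Finset.sum_ite_eq' (range p) 0 (fun _ => -(b ^ p))] at h1
  rw [if_pos (mem_range.mpr hp.pos)] at h1
  have hMp : M E b x p p = P x p * E ^ p := by
    have hcc : cc p p = 1 := by simp [cc]
    simp only [M]
    rw [hcc]
    simp
  rw [hMp] at h1
  rw [h1]
  abel

end Core

section Series

variable {A : Type*} [Ring A]

/-- the commutation relation `[e₁, e(u)] = e(u)²` in power-series form -/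
lemma lvl1 (e : ℕ → A) (he0 : e 0 = 0)
    (hee : ∀ r s : ℕ, 1 ≤ r → r < s →
      e r * e s - e s * e r = ∑ t ∈ Finset.Ico r s, e t * e (r + s - 1 - t)) :
    C (e 1) * PowerSeries.mk e - PowerSeries.mk e * C (e 1) = (PowerSeries.mk e) ^ 2 := by
  ext n
  rw [map_sub, coeff_C_mul, coeff_mul_C, coeff_mk, sq, coeff_mul,
    Finset.Nat.sum_antidiagonal_eq_sum_range_succ_mk]
  simp only [coeff_mk, Nat.succ_eq_add_one]
  match n with
  | 0 => simp [he0]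
  | 1 => simp [Finset.sum_range_succ, he0]
  | (n + 2) =>
    have h := hee 1 (n + 2) le_rfl (by omega)
    rw [Finset.sum_Ico_eq_sum_range] at h
    have hr : n + 2 - 1 = n + 1 := rfl
    rw [hr] at h
    rw [h]
    rw [sum_range_succ (fun k => e k * e (n + 2 - k)) (n + 2)]
    rw [Nat.sub_self, he0, mul_zero, add_zero]
    rw [sum_range_succ' (fun k => e k * e (n + 2 - k)) (n + 1)]
    rw [he0, zero_mul, add_zero]
    apply Finset.sum_congr rfl
    intro i hi
    have hi' : i < n + 1 := mem_range.mp hi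
    have h1 : 1 + i = i + 1 := by omega
    have h2 : 1 + (n + 2) - 1 - (1 + i) = n + 2 - (i + 1) := by omega
    rw [h2, h1]

/-- the index-shift on coefficient systems -/
def hat (f : ℕ → A) : ℕ → A := fun n => if n = 0 then 0 else f (n + 1)

lemma hat_zero (f : ℕ → A) : hat f 0 = 0 := rfl

lemma hat_pos (f : ℕ → A) {n : ℕ} (hn : n ≠ 0) : hat f n = f (n + 1) := if_neg hn

lemma shift_series (f : ℕ → A) (hf0 : f 0 = 0) :
    X * PowerSeries.mk (hat f) = PowerSeries.mk f - C (f 1) * X := by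
  ext n
  match n with
  | 0 =>
    have l : (coeff 0) (X * PowerSeries.mk (hat f)) = 0 := by
      rw [coeff_zero_eq_constantCoeff, map_mul, constantCoeff_X, zero_mul]
    have r : (coeff 0) (PowerSeries.mk f - C (f 1) * X) = 0 := by
      rw [map_sub, coeff_mk, hf0, coeff_zero_eq_constantCoeff, map_mul,
        constantCoeff_X, mul_zero, sub_zero]
    rw [l, r]
  | (n + 1) =>
    rw [coeff_succ_X_mul, coeff_mk, map_sub, coeff_mk, coeff_C_mul, coeff_X]
    match n with
    | 0 => simp [hat]
    | (m + 1) =>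
      have hne : ¬ (m + 1 + 1 = 1) := by omega
      rw [if_neg hne, mul_zero, sub_zero, hat_pos f (by omega : m + 1 ≠ 0)]

lemma base_pow (p : ℕ) (f : ℕ → A) (hf0 : f 0 = 0) :
    coeff p ((PowerSeries.mk f) ^ p) = (f 1) ^ p := by
  have hXG : PowerSeries.mk f = X * PowerSeries.mk (fun n => f (n + 1)) := by
    ext n
    match n with
    | 0 =>
      have l : (coeff 0) (PowerSeries.mk f) = 0 := by rw [coeff_mk, hf0]
      have r : (coeff 0) (X * PowerSeries.mk (fun n => f (n + 1))) = 0 := by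
        rw [coeff_zero_eq_constantCoeff, map_mul, constantCoeff_X, zero_mul]
      rw [l, r]
    | (n + 1) => rw [coeff_succ_X_mul, coeff_mk, coeff_mk]
  rw [hXG, ((commute_X (PowerSeries.mk fun n => f (n + 1))).symm.mul_pow p)]
  have h := coeff_X_pow_mul ((PowerSeries.mk fun n => f (n + 1)) ^ p) p 0
  rw [zero_add] at h
  rw [h, coeff_zero_eq_constantCoeff, map_pow, constantCoeff_mk]

lemma hat_hee (f : ℕ → A)
    (hee : ∀ r s : ℕ, 1 ≤ r → r < s →
      f r * f s - f s * f r = ∑ t ∈ Finset.Ico r s, f t * f (r + s - 1 - t)) :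
    ∀ r s : ℕ, 1 ≤ r → r < s →
      hat f r * hat f s - hat f s * hat f r
        = ∑ t ∈ Finset.Ico r s, hat f t * hat f (r + s - 1 - t) := by
  intro r s hr hrs
  have h := hee (r + 1) (s + 1) (by omega) (by omega)
  rw [hat_pos f (by omega : r ≠ 0), hat_pos f (by omega : s ≠ 0), h]
  rw [Finset.sum_Ico_eq_sum_range, Finset.sum_Ico_eq_sum_range]
  have hrange : s + 1 - (r + 1) = s - r := by omega
  rw [hrange]
  apply Finset.sum_congr rfl
  intro i hi
  have hi' : i < s - r := mem_range.mp hi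
  have ht1 : hat f (r + i) = f (r + i + 1) := hat_pos f (by omega)
  have ht2 : hat f (r + s - 1 - (r + i)) = f (r + s - 1 - (r + i) + 1) :=
    hat_pos f (by omega)
  rw [ht1, ht2]
  have h1 : r + 1 + i = r + i + 1 := by omega
  have h2 : r + 1 + (s + 1) - 1 - (r + 1 + i) = r + s - 1 - (r + i) + 1 := by omega
  rw [h2, h1]

lemma hat_hcent (p : ℕ) (hp : p.Prime) (hp2 : p ≠ 2) (hpA : ((p : ℕ) : A) = 0)
    (f : ℕ → A) (hf0 : f 0 = 0)
    (hee : ∀ r s : ℕ, 1 ≤ r → r < s →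
      f r * f s - f s * f r = ∑ t ∈ Finset.Ico r s, f t * f (r + s - 1 - t))
    (hcent : ∀ n : ℕ, coeff n ((PowerSeries.mk f) ^ p) ∈ Set.center A) :
    ∀ n : ℕ, coeff n ((PowerSeries.mk (hat f)) ^ p) ∈ Set.center A := by
  intro n
  have hXc : ∀ t : A⟦X⟧, Commute (X : A⟦X⟧) t := fun t => (commute_X t).symm
  have hrel : (PowerSeries.mk f) * (C (f 1) * X) = (C (f 1) * X) * (PowerSeries.mk f) - (PowerSeries.mk f) ^ 2 * X := by
    have h2 := lvl1 f hf0 hee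
    have h3 : PowerSeries.mk f * C (f 1) = C (f 1) * PowerSeries.mk f - (PowerSeries.mk f) ^ 2 := by
      rw [← h2]; abel
    calc PowerSeries.mk f * (C (f 1) * X) = (PowerSeries.mk f * C (f 1)) * X := by rw [mul_assoc]
      _ = (C (f 1) * PowerSeries.mk f - (PowerSeries.mk f) ^ 2) * X := by rw [h3]
      _ = (C (f 1) * PowerSeries.mk f) * X - (PowerSeries.mk f) ^ 2 * X := by rw [sub_mul]
      _ = (C (f 1) * X) * (PowerSeries.mk f) - (PowerSeries.mk f) ^ 2 * X := by
          rw [mul_assoc, (commute_X (PowerSeries.mk f)).eq, ← mul_assoc]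
  have hpR : ((p : ℕ) : A⟦X⟧) = 0 := by
    rw [← map_natCast (C (R := A)) p, hpA, map_zero]
  have hcore := core_p p hp hp2 hpR (PowerSeries.mk f) (C (f 1) * X) X hXc hrel
  have hX : X * PowerSeries.mk (hat f) = PowerSeries.mk f - C (f 1) * X := shift_series f hf0
  have hflip : X ^ p * (PowerSeries.mk (hat f)) ^ p
      = P (X : A⟦X⟧) p * (PowerSeries.mk f) ^ p - (C (f 1) * X) ^ p := by
    rw [← ((commute_X (PowerSeries.mk (hat f))).symm.mul_pow p), hX, hcore]
  have hco : coeff n ((PowerSeries.mk (hat f)) ^ p)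
      = coeff (n + p) (X ^ p * (PowerSeries.mk (hat f)) ^ p) := by
    rw [coeff_X_pow_mul]
  rw [hco, hflip, map_sub]
  rw [Semigroup.mem_center_iff]
  intro g
  have hPnat : ∀ i : ℕ, ∃ m : ℕ, coeff i (P (X : A⟦X⟧) p) = (m : A) := by
    have hPmap : P (X : A⟦X⟧) p
        = PowerSeries.map (Nat.castRingHom A) (P (X : ℕ⟦X⟧) p) := by
      rw [P_map (PowerSeries.map (Nat.castRingHom A)) (X : ℕ⟦X⟧) p,
        PowerSeries.map_X]
    intro i
    exact ⟨coeff i (P (X : ℕ⟦X⟧) p), by rw [hPmap, coeff_map]; rfl⟩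
  have hc1 : Commute g (coeff (n + p) (P (X : A⟦X⟧) p * (PowerSeries.mk f) ^ p)) := by
    rw [coeff_mul]
    apply Commute.sum_right
    intro ij _
    obtain ⟨m, hm⟩ := hPnat ij.1
    rw [hm]
    exact (Nat.cast_commute m g).symm.mul_right
      (Semigroup.mem_center_iff.mp (hcent ij.2) g)
  have hc2 : Commute g (coeff (n + p) ((C (f 1) * X) ^ p)) := by
    have hb : (C (f 1) * X) ^ p = C ((f 1) ^ p) * X ^ p := by
      rw [(commute_X (C (f 1))).mul_pow p, ← map_pow]
    rw [hb, coeff_C_mul, coeff_X_pow]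
    by_cases hn : n + p = p
    · rw [if_pos hn, mul_one]
      have hb2 : (f 1) ^ p = coeff p ((PowerSeries.mk f) ^ p) := (base_pow p f hf0).symm
      rw [hb2]
      exact Semigroup.mem_center_iff.mp (hcent p) g
    · rw [if_neg hn, mul_zero]
      exact Commute.zero_right g
  exact (hc1.sub_right hc2).eq

lemma main (p : ℕ) (hp : p.Prime) (hp2 : p ≠ 2) (hpA : ((p : ℕ) : A) = 0) :
    ∀ (r : ℕ) (f : ℕ → A), f 0 = 0 →
      (∀ r s : ℕ, 1 ≤ r → r < s →
        f r * f s - f s * f r = ∑ t ∈ Finset.Ico r s, f t * f (r + s - 1 - t)) →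
      (∀ n : ℕ, coeff n ((PowerSeries.mk f) ^ p) ∈ Set.center A) →
      (f r) ^ p ∈ Set.center A := by
  intro r
  induction r with
  | zero =>
    intro f hf0 _ _
    rw [hf0, zero_pow hp.ne_zero]
    exact Set.zero_mem_center
  | succ r ih =>
    intro f hf0 hee hcent
    rcases Nat.eq_zero_or_pos r with rfl | hr
    · rw [← base_pow p f hf0]
      exact hcent p
    · have hhat := ih (hat f) (hat_zero f) (hat_hee f hee)
        (hat_hcent p hp hp2 hpA f hf0 hee hcent)
      rw [show f (r + 1) = hat f r from (hat_pos f (by omega)).symm]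
      exact hhat

end Series

end Stmt16Aux

theorem stmt16 {k A : Type*} [Field k] [Ring A] [Algebra k A]
    (p : ℕ) [Fact p.Prime] [CharP k p] (hp : 2 < p)
    (e : ℕ → A) (he0 : e 0 = 0)
    (hee : ∀ r s : ℕ, 1 ≤ r → r < s →
      ⁅e r, e s⁆ = ∑ t ∈ Finset.Ico r s, e t * e (r + s - 1 - t))
    (hcent : ∀ n : ℕ, (PowerSeries.coeff n) ((PowerSeries.mk e) ^ p) ∈ Set.center A) :
    ∀ r : ℕ, (e r) ^ p ∈ Set.center A := by
  intro r
  have hprime : p.Prime := Fact.out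
  have hee' : ∀ r s : ℕ, 1 ≤ r → r < s →
      e r * e s - e s * e r = ∑ t ∈ Finset.Ico r s, e t * e (r + s - 1 - t) := by
    intro a b h1 h2
    rw [← Ring.lie_def]
    exact hee a b h1 h2
  have hpA : ((p : ℕ) : A) = 0 := by
    rw [← map_natCast (algebraMap k A) p, CharP.cast_eq_zero k p, map_zero]
  exact Stmt16Aux.main p hprime (by omega) hpA r e he0 hee' hcent
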